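/- Let B be a Banach algebra with identity of norm 1, and let L ∈ B with ‖L‖ ≤ 1. Let E₁ be a set of μ₁ integers contained in [0, n], and E₂ a set of μ₂ consecutive nonnegative integers. Set u_i = (1/μ_i) Σ_{j ∈ E_i} L^j. Then ‖u₁u₂ − u₂‖ ≤ 2n/μ₂. -/

import Mathlib

/-- Averaging estimate: if `‖L‖ ≤ 1` in a unital Banach algebra, `E₁` is a set of integers in
`[0,n]` and `E₂` is a set of `μ₂` consecutive nonnegative integers, with
`uᵢ = (1/μᵢ)Σ_{j∈Eᵢ} L^j`, then `‖u₁u₂ − u₂‖ ≤ 2n/μ₂`. -/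
theorem stmt11 {B : Type*} [NormedRing B] [NormOneClass B] [NormedAlgebra ℝ B]
    (L : B) (hL : ‖L‖ ≤ 1) (n : ℕ) (E₁ : Finset ℕ) (hE₁ : ∀ j ∈ E₁, j ≤ n)
    (hE₁ne : E₁.Nonempty) (m₀ μ₂ : ℕ) (hμ₂ : 0 < μ₂) :
    ‖((E₁.card : ℝ)⁻¹ • ∑ j ∈ E₁, L ^ j) *
        ((μ₂ : ℝ)⁻¹ • ∑ k ∈ Finset.Ico m₀ (m₀ + μ₂), L ^ k) -
      (μ₂ : ℝ)⁻¹ • ∑ k ∈ Finset.Ico m₀ (m₀ + μ₂), L ^ k‖ ≤ 2 * n / μ₂ := by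
  have hpow : ∀ k : ℕ, ‖L ^ k‖ ≤ 1 := by
    intro k
    induction k with
    | zero => simp
    | succ k ih =>
      calc ‖L ^ (k+1)‖ = ‖L ^ k * L‖ := by rw [pow_succ]
        _ ≤ ‖L ^ k‖ * ‖L‖ := norm_mul_le _ _
        _ ≤ 1 * 1 := mul_le_mul ih hL (norm_nonneg _) zero_le_one
        _ = 1 := one_mul 1
  set S : B := ∑ k ∈ Finset.Ico m₀ (m₀ + μ₂), L ^ k with hS
  have hshift : ∀ j : ℕ, L ^ j * S = ∑ k ∈ Finset.Ico (m₀ + j) (m₀ + j + μ₂), L ^ k := by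
    intro j
    rw [hS, Finset.mul_sum]
    rw [show m₀ + j + μ₂ = m₀ + μ₂ + j by ring,
      show m₀ + j = m₀ + j by rfl]
    rw [Finset.sum_Ico_eq_sum_range, Finset.sum_Ico_eq_sum_range]
    have : m₀ + μ₂ + j - (m₀ + j) = m₀ + μ₂ - m₀ := by omega
    rw [this]
    refine Finset.sum_congr rfl fun i _ => ?_
    rw [← pow_add]
    ring_nf
  have hsumbound : ∀ k ∈ Finset.Ico m₀ (m₀ + n), ‖L ^ k‖ ≤ 1 := fun k _ => hpow k
  have key : ∀ j ∈ E₁, ‖L ^ j * S - S‖ ≤ 2 * n := by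
    intro j hj
    have hjn := hE₁ j hj
    have hsplit1 : (∑ k ∈ Finset.Ico m₀ (m₀ + j), L ^ k) +
        ∑ k ∈ Finset.Ico (m₀ + j) (m₀ + j + μ₂), L ^ k =
        ∑ k ∈ Finset.Ico m₀ (m₀ + j + μ₂), L ^ k :=
      Finset.sum_Ico_consecutive _ (by omega) (by omega)
    have hsplit2 : S + ∑ k ∈ Finset.Ico (m₀ + μ₂) (m₀ + j + μ₂), L ^ k =
        ∑ k ∈ Finset.Ico m₀ (m₀ + j + μ₂), L ^ k :=
      Finset.sum_Ico_consecutive _ (by omega) (by omega)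
    have heq : L ^ j * S - S =
        (∑ k ∈ Finset.Ico (m₀ + μ₂) (m₀ + j + μ₂), L ^ k) -
          ∑ k ∈ Finset.Ico m₀ (m₀ + j), L ^ k := by
      rw [hshift j, sub_eq_sub_iff_add_eq_add, add_comm]
      rw [hsplit1.trans hsplit2.symm]
      exact add_comm _ _
    rw [heq]
    have h1 : ‖∑ k ∈ Finset.Ico (m₀ + μ₂) (m₀ + j + μ₂), L ^ k‖ ≤ j := by
      calc ‖∑ k ∈ Finset.Ico (m₀ + μ₂) (m₀ + j + μ₂), L ^ k‖
          ≤ ∑ k ∈ Finset.Ico (m₀ + μ₂) (m₀ + j + μ₂), ‖L ^ k‖ := norm_sum_le _ _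
        _ ≤ ∑ k ∈ Finset.Ico (m₀ + μ₂) (m₀ + j + μ₂), (1 : ℝ) :=
            Finset.sum_le_sum fun k _ => hpow k
        _ = j := by simp
    have h2 : ‖∑ k ∈ Finset.Ico m₀ (m₀ + j), L ^ k‖ ≤ j := by
      calc ‖∑ k ∈ Finset.Ico m₀ (m₀ + j), L ^ k‖
          ≤ ∑ k ∈ Finset.Ico m₀ (m₀ + j), ‖L ^ k‖ := norm_sum_le _ _
        _ ≤ ∑ k ∈ Finset.Ico m₀ (m₀ + j), (1 : ℝ) := Finset.sum_le_sum fun k _ => hpow k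
        _ = j := by simp
    calc ‖(∑ k ∈ Finset.Ico (m₀ + μ₂) (m₀ + j + μ₂), L ^ k) -
          ∑ k ∈ Finset.Ico m₀ (m₀ + j), L ^ k‖
        ≤ ‖∑ k ∈ Finset.Ico (m₀ + μ₂) (m₀ + j + μ₂), L ^ k‖ +
            ‖∑ k ∈ Finset.Ico m₀ (m₀ + j), L ^ k‖ := norm_sub_le _ _
      _ ≤ (j : ℝ) + j := add_le_add h1 h2
      _ ≤ 2 * n := by
          have : (j : ℝ) ≤ n := Nat.cast_le.mpr hjn
          linarith
  have hcard : (0 : ℝ) < E₁.card := by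
    exact_mod_cast Finset.card_pos.mpr hE₁ne
  have hμ : (0 : ℝ) < μ₂ := by exact_mod_cast hμ₂
  have hrw : ((E₁.card : ℝ)⁻¹ • ∑ j ∈ E₁, L ^ j) * ((μ₂ : ℝ)⁻¹ • S) - (μ₂ : ℝ)⁻¹ • S =
      ((E₁.card : ℝ)⁻¹ * (μ₂ : ℝ)⁻¹) • ∑ j ∈ E₁, (L ^ j * S - S) := by
    rw [smul_mul_assoc, mul_smul_comm, smul_smul, Finset.sum_mul,
      Finset.sum_sub_distrib, smul_sub]
    congr 1
    rw [Finset.sum_const, ← Nat.cast_smul_eq_nsmul ℝ, smul_smul]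
    congr 1
    field_simp
  rw [hrw, norm_smul]
  have hsum : ‖∑ j ∈ E₁, (L ^ j * S - S)‖ ≤ E₁.card * (2 * n) := by
    calc ‖∑ j ∈ E₁, (L ^ j * S - S)‖ ≤ ∑ j ∈ E₁, ‖L ^ j * S - S‖ := norm_sum_le _ _
      _ ≤ ∑ j ∈ E₁, (2 * (n : ℝ)) := Finset.sum_le_sum key
      _ = E₁.card * (2 * n) := by rw [Finset.sum_const, nsmul_eq_mul]
  have hnormc : ‖(E₁.card : ℝ)⁻¹ * (μ₂ : ℝ)⁻¹‖ = (E₁.card : ℝ)⁻¹ * (μ₂ : ℝ)⁻¹ := by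
    rw [Real.norm_eq_abs, abs_of_pos (by positivity)]
  rw [hnormc]
  calc (E₁.card : ℝ)⁻¹ * (μ₂ : ℝ)⁻¹ * ‖∑ j ∈ E₁, (L ^ j * S - S)‖
      ≤ (E₁.card : ℝ)⁻¹ * (μ₂ : ℝ)⁻¹ * (E₁.card * (2 * n)) := by
        apply mul_le_mul_of_nonneg_left hsum (by positivity)
    _ = 2 * n / μ₂ := by field_simp
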